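/- For any two output sequences generated by (possibly different) messages in a variable-length feedback code over a DMC with minimum transition probability λ > 0, the likelihoods satisfy P(Y^n = y^n | M = m) ≥ (λ/(1−λ))^n · P(Y^n = y^n | M = m̃) for all messages m, m̃ and all y^n. -/
import Mathlib


open scoped BigOperators

noncomputable section

/-- Likelihood of an output history (stored in reverse chronological order: head is the most
recent output) given the message `m`, for a variable-length feedback code with encoder
`enc` (mapping the message and the past outputs to the next channel input) over the
channel `W`. -/
def lik {X Y Msg : Type*} (W : X → Y → ℝ) (enc : Msg → List Y → X) (m : Msg) :
    List Y → ℝ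
  | [] => 1
  | y :: ys => lik W enc m ys * W (enc m ys) y

/-- Likelihood-ratio bound: for a variable-length feedback code over a DMC with minimum
transition probability `λ > 0`, the likelihoods of any output history under any two
messages satisfy `P(Y^n = y^n | M = m) ≥ (λ/(1-λ))^n ⬝ P(Y^n = y^n | M = m̃)`. -/
theorem likelihood_ratio_bound {X Y Msg : Type*} [Fintype X] [Fintype Y]
    (W : X → Y → ℝ) (lam : ℝ) (hlam : 0 < lam)
    (hlow : ∀ x y, lam ≤ W x y) (hmin : ∃ x y, W x y = lam)
    (hrow : ∀ x, ∑ y, W x y = 1)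
    (enc : Msg → List Y → X) :
    ∀ (m m' : Msg) (ys : List Y),
      (lam / (1 - lam)) ^ ys.length * lik W enc m' ys ≤ lik W enc m ys := by
  -- nonnegativity of likelihoods
  have hWnn : ∀ x y, (0:ℝ) ≤ W x y := fun x y => le_trans hlam.le (hlow x y)
  have hliknn : ∀ (m : Msg) (ys : List Y), 0 ≤ lik W enc m ys := by
    intro m ys
    induction ys with
    | nil => simp [lik]
    | cons y ys ih => exact mul_nonneg ih (hWnn _ _)
  -- lam ≤ 1
  obtain ⟨x0, y0, hx0⟩ := hmin
  have hlam1 : lam ≤ 1 := by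
    have h := hrow x0
    have : W x0 y0 ≤ ∑ y, W x0 y :=
      Finset.single_le_sum (fun y _ => hWnn x0 y) (Finset.mem_univ y0)
    rw [h, hx0] at this
    exact this
  rcases eq_or_lt_of_le hlam1 with heq | hlt
  · -- lam = 1 : ratio is 1/0 = 0
    intro m m' ys
    cases ys with
    | nil => simp [lik]
    | cons y ys =>
        have : lam / (1 - lam) = 0 := by rw [← heq]; simp
        rw [this]
        simpa using hliknn m (y :: ys)
  · -- lam < 1
    have hcard : 2 ≤ Fintype.card Y := by
      by_contra h
      push_neg at h
      have hpos : 0 < Fintype.card Y := Fintype.card_pos_iff.mpr ⟨y0⟩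
      have h1c : Fintype.card Y = 1 := by omega
      have hsub : Subsingleton Y := Fintype.card_le_one_iff_subsingleton.mp h1c.le
      have h1 : ∑ y, W x0 y = W x0 y0 := by
          rw [Fintype.sum_eq_single y0]
          intro y hy
          exact absurd (Subsingleton.elim y y0) hy
      rw [hrow x0, hx0] at h1
      exact absurd h1.symm hlt.ne
    classical
    have hub : ∀ x y, W x y ≤ 1 - lam := by
      intro x y
      obtain ⟨y', hy'⟩ := Fintype.exists_ne_of_one_lt_card (by omega) y
      have hsub : ({y, y'} : Finset Y) ⊆ Finset.univ := Finset.subset_univ _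
      have hsum : ∑ z ∈ ({y, y'} : Finset Y), W x z ≤ ∑ z, W x z :=
        Finset.sum_le_sum_of_subset_of_nonneg hsub (fun z _ _ => hWnn x z)
      rw [Finset.sum_pair (Ne.symm hy'), hrow x] at hsum
      have := hlow x y'
      linarith
    have hr0 : (0:ℝ) ≤ lam / (1 - lam) := div_nonneg hlam.le (by linarith)
    intro m m' ys
    induction ys with
    | nil => simp [lik]
    | cons y ys ih =>
        have key : lam / (1 - lam) * W (enc m' ys) y ≤ W (enc m ys) y := by
          have h1 : lam / (1 - lam) * W (enc m' ys) y ≤ lam / (1 - lam) * (1 - lam) :=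
            mul_le_mul_of_nonneg_left (hub _ _) hr0
          have h2 : lam / (1 - lam) * (1 - lam) = lam :=
            div_mul_cancel₀ lam (by linarith : (1:ℝ) - lam ≠ 0)
          calc lam / (1 - lam) * W (enc m' ys) y
              ≤ lam / (1 - lam) * (1 - lam) := h1
            _ = lam := h2
            _ ≤ W (enc m ys) y := hlow _ _
        have : (lam / (1 - lam)) ^ (y :: ys).length * lik W enc m' (y :: ys)
            = ((lam / (1 - lam)) ^ ys.length * lik W enc m' ys)
              * (lam / (1 - lam) * W (enc m' ys) y) := by
          simp [lik, pow_succ]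
          ring
        rw [this]
        exact mul_le_mul ih key
          (mul_nonneg hr0 (hWnn _ _)) (hliknn m ys)

end
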